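/- Let f be a C¹ diffeomorphism of a compact 3-manifold M. Suppose μ_n are f-invariant measures decomposed as μ_n = β_n μ_n¹ + γ_n μ_n² + (1−β_n−γ_n) μ_n⁰ with β_n, γ_n, β_n+γ_n ∈ [0,1], and assume β_n → β, γ_n → γ, μ_n^i → μ^i (i = 0,1,2) weakly, μ_n → μ, and λ⁺_Σ(μ_n,f) → λ⁺_Σ(μ,f). If β > 0, then lim_n λ⁺_Σ(μ_n¹,f) = λ⁺_Σ(μ¹,f); if γ > 0, then lim_n λ⁺_Σ(μ_n²,f) = λ⁺_Σ(μ²,f). -/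
import Mathlib


open MeasureTheory Filter Topology
open scoped NNReal

/-- Key real-analysis lemma: if `pₙaₙ + qₙbₙ + rₙcₙ → PA + QB + RC` with nonnegative
coefficients converging to `P, Q, R`, `P > 0`, and each of `aₙ, bₙ, cₙ` is eventually
bounded above by `A + ε`, `B + ε`, `C + ε` respectively, then `aₙ → A`. -/
private lemma key_tendsto {p q r a b c : ℕ → ℝ} {P Q R A B C : ℝ}
    (hp : Tendsto p atTop (𝓝 P)) (hq : Tendsto q atTop (𝓝 Q)) (hr : Tendsto r atTop (𝓝 R))
    (hp0 : ∀ n, 0 ≤ p n) (hq0 : ∀ n, 0 ≤ q n) (hr0 : ∀ n, 0 ≤ r n)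
    (ha : ∀ ε > (0 : ℝ), ∀ᶠ n in atTop, a n < A + ε)
    (hb : ∀ ε > (0 : ℝ), ∀ᶠ n in atTop, b n < B + ε)
    (hc : ∀ ε > (0 : ℝ), ∀ᶠ n in atTop, c n < C + ε)
    (hS : Tendsto (fun n => p n * a n + q n * b n + r n * c n) atTop
      (𝓝 (P * A + Q * B + R * C)))
    (hP : 0 < P) : Tendsto a atTop (𝓝 A) := by
  have hQ0 : 0 ≤ Q := ge_of_tendsto' hq hq0
  have hR0 : 0 ≤ R := ge_of_tendsto' hr hr0
  have hT : Tendsto (fun n => p n * a n) atTop (𝓝 (P * A)) := by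
    rw [Metric.tendsto_nhds]
    intro ε' hε'
    set K : ℝ := P + Q + R + |A| + |B| + |C| + 4 with hK
    have hKpos : 0 < K := by
      have := abs_nonneg A; have := abs_nonneg B; have := abs_nonneg C
      rw [hK]; linarith
    set ε : ℝ := min 1 (ε' / K) with hεdef
    have hε : 0 < ε := lt_min one_pos (div_pos hε' hKpos)
    have hεle1 : ε ≤ 1 := min_le_left _ _
    have hεK : ε * K ≤ ε' := by
      have h1 : ε ≤ ε' / K := min_le_right _ _
      calc ε * K ≤ (ε' / K) * K := by
            exact mul_le_mul_of_nonneg_right h1 hKpos.le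
        _ = ε' := by field_simp
    have hev_abs : ∀ {u : ℕ → ℝ} {L : ℝ}, Tendsto u atTop (𝓝 L) →
        ∀ᶠ n in atTop, |u n - L| < ε := by
      intro u L h
      simpa [Real.dist_eq] using Metric.tendsto_nhds.mp h ε hε
    filter_upwards [ha ε hε, hb ε hε, hc ε hε, hev_abs hp, hev_abs hq, hev_abs hr,
      hev_abs hS] with n h1 h2 h3 h4 h5 h6 h7
    have habs : ∀ {x D : ℝ}, |x| < ε → (x * (D + ε) ≤ ε * (|D| + 1)) := by
      intro x D hx
      calc x * (D + ε) ≤ |x * (D + ε)| := le_abs_self _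
        _ = |x| * |D + ε| := abs_mul _ _
        _ ≤ ε * (|D| + 1) := by
            apply mul_le_mul hx.le ?_ (abs_nonneg _) hε.le
            calc |D + ε| ≤ |D| + |ε| := abs_add_le _ _
              _ ≤ |D| + 1 := by rw [abs_of_nonneg hε.le]; linarith
    have hA1 : (p n - P) * (A + ε) ≤ ε * (|A| + 1) := habs h4
    have hB1 : (q n - Q) * (B + ε) ≤ ε * (|B| + 1) := habs h5
    have hC1 : (r n - R) * (C + ε) ≤ ε * (|C| + 1) := habs h6
    have hpA : p n * a n ≤ p n * (A + ε) := mul_le_mul_of_nonneg_left h1.le (hp0 n)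
    have hqB : q n * b n ≤ q n * (B + ε) := mul_le_mul_of_nonneg_left h2.le (hq0 n)
    have hrC : r n * c n ≤ r n * (C + ε) := mul_le_mul_of_nonneg_left h3.le (hr0 n)
    have h7' := abs_lt.mp h7
    have e1 : 0 ≤ ε * P := mul_nonneg hε.le hP.le
    have e2 : 0 ≤ ε * Q := mul_nonneg hε.le hQ0
    have e3 : 0 ≤ ε * R := mul_nonneg hε.le hR0
    have e4 : 0 ≤ ε * |A| := mul_nonneg hε.le (abs_nonneg _)
    have e5 : 0 ≤ ε * |B| := mul_nonneg hε.le (abs_nonneg _)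
    have e6 : 0 ≤ ε * |C| := mul_nonneg hε.le (abs_nonneg _)
    have hKexp : ε * K = ε * P + ε * Q + ε * R + ε * |A| + ε * |B| + ε * |C| + 4 * ε := by
      rw [hK]; ring
    rw [Real.dist_eq, abs_sub_lt_iff]
    constructor
    · linarith [hpA, hA1, hεK, hKexp, hε, e1, e2, e3, e4, e5, e6]
    · linarith [h7'.2, hqB, hrC, hB1, hC1, hεK, hKexp, hε, e1, e2, e3, e4, e5, e6]
  have hne : ∀ᶠ n in atTop, (0 : ℝ) < p n := hp.eventually_const_lt hP
  have hdiv : Tendsto (fun n => (p n * a n) / p n) atTop (𝓝 (P * A / P)) :=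
    hT.div hp hP.ne'
  have hPA : P * A / P = A := by field_simp
  rw [hPA] at hdiv
  exact hdiv.congr' (hne.mono fun n hn => mul_div_cancel_left₀ _ hn.ne')

/-- Continuity of the sum of positive Lyapunov exponents along the pieces of a
decomposition.  `lamSig` denotes `ν ↦ λ⁺_Σ(ν,f)`, which is affine and upper
semi-continuous on invariant probability measures of the `C¹` diffeomorphism `f`
of a compact 3-manifold.  If `μ_n = β_n μ_n¹ + γ_n μ_n² + (1−β_n−γ_n) μ_n⁰` with
`β_n → β`, `γ_n → γ`, `μ_n^i → μ^i`, `μ_n → μ`, and `λ⁺_Σ(μ_n,f) → λ⁺_Σ(μ,f)`,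
then `β > 0` implies `λ⁺_Σ(μ_n¹,f) → λ⁺_Σ(μ¹,f)` and `γ > 0` implies
`λ⁺_Σ(μ_n²,f) → λ⁺_Σ(μ²,f)`. -/
theorem decomposition_continuity_lyapunov
    {X : Type*} [MeasurableSpace X] [TopologicalSpace X] [BorelSpace X]
    (f : X → X)
    (lamSig : ProbabilityMeasure X → ℝ)
    (haffine : ∀ (b c : ℝ≥0), b + c ≤ 1 →
      ∀ (ν ν1 ν2 ν0 : ProbabilityMeasure X),
        (ν : Measure X) = b • (ν1 : Measure X) + c • (ν2 : Measure X)
            + (1 - b - c) • (ν0 : Measure X) →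
        lamSig ν = (b : ℝ) * lamSig ν1 + (c : ℝ) * lamSig ν2
            + ((1 - b - c : ℝ≥0) : ℝ) * lamSig ν0)
    (husc : ∀ (νs : ℕ → ProbabilityMeasure X) (ν : ProbabilityMeasure X),
      Tendsto νs atTop (𝓝 ν) → limsup (fun n => lamSig (νs n)) atTop ≤ lamSig ν)
    (hbdd : ∃ B : ℝ, ∀ ν, |lamSig ν| ≤ B)
    (βn γn : ℕ → ℝ≥0) (β γ : ℝ≥0) (hβγn : ∀ n, βn n + γn n ≤ 1) (hβγ : β + γ ≤ 1)
    (μn μn1 μn2 μn0 : ℕ → ProbabilityMeasure X)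
    (μ μ1 μ2 μ0 : ProbabilityMeasure X)
    (hinv : ∀ n, MeasurePreserving f (μn n : Measure X) (μn n : Measure X))
    (hdecomp : ∀ n, (μn n : Measure X)
      = (βn n) • (μn1 n : Measure X) + (γn n) • (μn2 n : Measure X)
        + (1 - βn n - γn n) • (μn0 n : Measure X))
    (hβconv : Tendsto (fun n => ((βn n : ℝ))) atTop (𝓝 (β : ℝ)))
    (hγconv : Tendsto (fun n => ((γn n : ℝ))) atTop (𝓝 (γ : ℝ)))
    (hμn : Tendsto μn atTop (𝓝 μ))
    (hμn1 : Tendsto μn1 atTop (𝓝 μ1))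
    (hμn2 : Tendsto μn2 atTop (𝓝 μ2))
    (hμn0 : Tendsto μn0 atTop (𝓝 μ0))
    (hlam : Tendsto (fun n => lamSig (μn n)) atTop (𝓝 (lamSig μ))) :
    ((0 : ℝ) < β → Tendsto (fun n => lamSig (μn1 n)) atTop (𝓝 (lamSig μ1))) ∧
    ((0 : ℝ) < γ → Tendsto (fun n => lamSig (μn2 n)) atTop (𝓝 (lamSig μ2))) := by
  obtain ⟨B, hB⟩ := hbdd
  -- real coercions of the third coefficient
  have hcoe : ∀ (b c : ℝ≥0), b + c ≤ 1 →
      ((1 - b - c : ℝ≥0) : ℝ) = 1 - (b : ℝ) - (c : ℝ) := by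
    intro b c h
    rw [tsub_tsub, NNReal.coe_sub h]
    push_cast; ring
  have hδconv : Tendsto (fun n => ((1 - βn n - γn n : ℝ≥0) : ℝ)) atTop
      (𝓝 ((1 - β - γ : ℝ≥0) : ℝ)) := by
    have : Tendsto (fun n => 1 - (βn n : ℝ) - (γn n : ℝ)) atTop
        (𝓝 (1 - (β : ℝ) - (γ : ℝ))) := (tendsto_const_nhds.sub hβconv).sub hγconv
    rw [hcoe β γ hβγ]
    exact this.congr fun n => (hcoe _ _ (hβγn n)).symm
  -- the recombined limit measure ν
  have hsum : β + γ + (1 - β - γ) = (1 : ℝ≥0) := by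
    rw [tsub_tsub]; exact add_tsub_cancel_of_le hβγ
  have hν_prob : IsProbabilityMeasure
      (β • (μ1 : Measure X) + γ • (μ2 : Measure X) + (1 - β - γ) • (μ0 : Measure X)) := by
    constructor
    simp only [Measure.add_apply, Measure.coe_nnreal_smul_apply, measure_univ, smul_eq_mul,
      mul_one]
    rw [← ENNReal.coe_add, ← ENNReal.coe_add, hsum, ENNReal.coe_one]
  set ν : ProbabilityMeasure X :=
    ⟨β • (μ1 : Measure X) + γ • (μ2 : Measure X) + (1 - β - γ) • (μ0 : Measure X),
      hν_prob⟩ with hνdef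
  -- integrals split along any decomposition
  have hsplit : ∀ (b c : ℝ≥0) (ρ ρ1 ρ2 ρ0 : ProbabilityMeasure X),
      (ρ : Measure X) = b • (ρ1 : Measure X) + c • (ρ2 : Measure X)
        + (1 - b - c) • (ρ0 : Measure X) →
      ∀ g : BoundedContinuousFunction X ℝ, ∫ x, g x ∂(ρ : Measure X)
        = (b : ℝ) * ∫ x, g x ∂(ρ1 : Measure X) + (c : ℝ) * ∫ x, g x ∂(ρ2 : Measure X)
          + ((1 - b - c : ℝ≥0) : ℝ) * ∫ x, g x ∂(ρ0 : Measure X) := by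
    intro b c ρ ρ1 ρ2 ρ0 hρ g
    rw [hρ, integral_add_measure, integral_add_measure, integral_smul_nnreal_measure,
      integral_smul_nnreal_measure, integral_smul_nnreal_measure]
    · simp [NNReal.smul_def]
    · exact g.integrable _
    · exact g.integrable _
    · exact (g.integrable _).add_measure (g.integrable _)
    · exact g.integrable _
  have hint : ∀ (m : ℕ → ProbabilityMeasure X) (m' : ProbabilityMeasure X),
      Tendsto m atTop (𝓝 m') → ∀ g : BoundedContinuousFunction X ℝ,
      Tendsto (fun n => ∫ x, g x ∂(m n : Measure X)) atTop
        (𝓝 (∫ x, g x ∂(m' : Measure X))) := fun m m' h g =>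
    ProbabilityMeasure.tendsto_iff_forall_integral_tendsto.mp h g
  -- integrals against μ and ν agree
  have hμν_int : ∀ g : BoundedContinuousFunction X ℝ,
      ∫ x, g x ∂(μ : Measure X) = ∫ x, g x ∂(ν : Measure X) := by
    intro g
    have h1 : Tendsto (fun n => ∫ x, g x ∂(μn n : Measure X)) atTop
        (𝓝 (∫ x, g x ∂(ν : Measure X))) := by
      have h2 : Tendsto (fun n => ∫ x, g x ∂(μn n : Measure X)) atTop
          (𝓝 ((β : ℝ) * ∫ x, g x ∂(μ1 : Measure X) + (γ : ℝ) * ∫ x, g x ∂(μ2 : Measure X)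
            + ((1 - β - γ : ℝ≥0) : ℝ) * ∫ x, g x ∂(μ0 : Measure X))) := by
        have := ((hβconv.mul (hint _ _ hμn1 g)).add (hγconv.mul (hint _ _ hμn2 g))).add
          (hδconv.mul (hint _ _ hμn0 g))
        exact this.congr fun n => (hsplit _ _ _ _ _ _ (hdecomp n) g).symm
      rwa [← hsplit β γ ν μ1 μ2 μ0 rfl g] at h2
    exact tendsto_nhds_unique (hint _ _ hμn g) h1
  -- lamSig μ = lamSig ν by upper semicontinuity both ways
  have hμν : lamSig μ = lamSig ν := by
    have t1 : Tendsto (fun _ : ℕ => μ) atTop (𝓝 ν) :=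
      ProbabilityMeasure.tendsto_iff_forall_integral_tendsto.mpr fun g => by
        rw [hμν_int g]; exact tendsto_const_nhds
    have t2 : Tendsto (fun _ : ℕ => ν) atTop (𝓝 μ) :=
      ProbabilityMeasure.tendsto_iff_forall_integral_tendsto.mpr fun g => by
        rw [← hμν_int g]; exact tendsto_const_nhds
    have l1 := husc _ _ t1
    have l2 := husc _ _ t2
    rw [limsup_const] at l1 l2
    exact le_antisymm l1 l2
  have hν_aff : lamSig ν = (β : ℝ) * lamSig μ1 + (γ : ℝ) * lamSig μ2
      + ((1 - β - γ : ℝ≥0) : ℝ) * lamSig μ0 := haffine β γ hβγ ν μ1 μ2 μ0 rfl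
  -- the converging sum of the pieces
  have hS : Tendsto (fun n => ((βn n : ℝ)) * lamSig (μn1 n) + ((γn n : ℝ)) * lamSig (μn2 n)
      + ((1 - βn n - γn n : ℝ≥0) : ℝ) * lamSig (μn0 n)) atTop
      (𝓝 ((β : ℝ) * lamSig μ1 + (γ : ℝ) * lamSig μ2
        + ((1 - β - γ : ℝ≥0) : ℝ) * lamSig μ0)) := by
    have h := hlam
    rw [hμν, hν_aff] at h
    exact h.congr fun n => haffine _ _ (hβγn n) _ _ _ _ (hdecomp n)
  -- eventual upper bounds from upper semicontinuity
  have hev : ∀ (νs : ℕ → ProbabilityMeasure X) (ν' : ProbabilityMeasure X),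
      Tendsto νs atTop (𝓝 ν') → ∀ ε > (0 : ℝ),
      ∀ᶠ n in atTop, lamSig (νs n) < lamSig ν' + ε := by
    intro νs ν' h ε hε
    refine eventually_lt_of_limsup_lt ((husc νs ν' h).trans_lt (lt_add_of_pos_right _ hε)) ?_
    exact isBoundedUnder_of ⟨B, fun n => (abs_le.mp (hB _)).2⟩
  constructor
  · intro hβpos
    exact key_tendsto hβconv hγconv hδconv (fun n => (βn n).coe_nonneg)
      (fun n => (γn n).coe_nonneg) (fun n => NNReal.coe_nonneg _)
      (hev _ _ hμn1) (hev _ _ hμn2) (hev _ _ hμn0) hS hβpos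
  · intro hγpos
    have hS' : Tendsto (fun n => ((γn n : ℝ)) * lamSig (μn2 n) + ((βn n : ℝ)) * lamSig (μn1 n)
        + ((1 - βn n - γn n : ℝ≥0) : ℝ) * lamSig (μn0 n)) atTop
        (𝓝 ((γ : ℝ) * lamSig μ2 + (β : ℝ) * lamSig μ1
          + ((1 - β - γ : ℝ≥0) : ℝ) * lamSig μ0)) := by
      have h := hS
      rw [show (β : ℝ) * lamSig μ1 + (γ : ℝ) * lamSig μ2
          + ((1 - β - γ : ℝ≥0) : ℝ) * lamSig μ0
          = (γ : ℝ) * lamSig μ2 + (β : ℝ) * lamSig μ1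
          + ((1 - β - γ : ℝ≥0) : ℝ) * lamSig μ0 by ring] at h
      exact h.congr fun n => by ring
    exact key_tendsto hγconv hβconv hδconv (fun n => (γn n).coe_nonneg)
      (fun n => (βn n).coe_nonneg) (fun n => NNReal.coe_nonneg _)
      (hev _ _ hμn2) (hev _ _ hμn1) (hev _ _ hμn0) hS' hγpos
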